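/- For every nonnegative integer n, F_{n+1}(x) = x * sum over k from 0 to n of binomial(n,k) * (F_k(x) + x * F_k'(x)), where F_n is the geometric polynomial and F_k' its derivative with respect to x. -/

import Mathlib

open Finset Polynomial

/-- Stirling numbers of the second kind. -/
def S : ℕ → ℕ → ℕ
  | 0, 0 => 1
  | 0, _ + 1 => 0
  | _ + 1, 0 => 0
  | n + 1, k + 1 => (k + 1) * S n (k + 1) + S n k

lemma S_eq_zero : ∀ {n m : ℕ}, n < m → S n m = 0
  | 0, m + 1, _ => rfl
  | n + 1, m + 1, h => by
    have h1 : n < m + 1 := Nat.lt_of_succ_lt_succ h |>.trans (Nat.lt_succ_self m)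
    have h2 : n < m := Nat.lt_of_succ_lt_succ h
    simp [S, S_eq_zero h1, S_eq_zero h2]

lemma S_key : ∀ n m : ℕ, S (n + 1) (m + 1) = ∑ k ∈ range (n + 1), n.choose k * S k m := by
  intro n
  induction n with
  | zero => intro m; simp [S]
  | succ n ih =>
    intro m
    rw [Finset.sum_range_succ']
    simp only [Nat.choose_succ_succ, add_mul, Nat.choose_zero_right, one_mul]
    rw [Finset.sum_add_distrib]
    simp only [Nat.succ_eq_add_one]
    conv_rhs => rw [add_assoc]
    have e1 : ∑ k ∈ range (n + 1), n.choose (k+1) * S (k+1) m + S 0 m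
        = ∑ k ∈ range (n + 1), n.choose k * S k m := by
      have h := Finset.sum_range_succ' (fun k => n.choose k * S k m) (n+1)
      rw [Nat.choose_zero_right, one_mul] at h
      rw [← h, Finset.sum_range_succ, Nat.choose_succ_self, zero_mul, add_zero]
    rw [e1]
    have step : ∑ k ∈ range (n + 1), n.choose k * S (k+1) m
        = m * S (n+1) (m+1) + S (n+1) m := by
      cases m with
      | zero =>
        have hz : ∀ k, S (k+1) 0 = 0 := fun k => rfl
        simp [hz, S]
      | succ m' =>
        have hr : ∀ k, S (k+1) (m'+1) = (m'+1) * S k (m'+1) + S k m' := fun k => rfl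
        have h1 : ∑ k ∈ range (n+1), n.choose k * S (k+1) (m'+1)
            = (m'+1) * (∑ k ∈ range (n+1), n.choose k * S k (m'+1))
              + ∑ k ∈ range (n+1), n.choose k * S k m' := by
          rw [Finset.mul_sum, ← Finset.sum_add_distrib]
          exact Finset.sum_congr rfl fun k _ => by rw [hr k]; ring
        rw [h1, ← ih (m'+1), ← ih m']
    rw [step]
    rw [show S (n+1+1) (m+1) = (m+1) * S (n+1) (m+1) + S (n+1) m from rfl, ← ih m]
    ring

lemma X_mul_deriv (a : ℤ) (m : ℕ) :
    Polynomial.X * Polynomial.derivative (Polynomial.C a * Polynomial.X ^ m)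
      = Polynomial.C (a * m) * Polynomial.X ^ m := by
  cases m with
  | zero => simp
  | succ m' =>
    rw [Polynomial.derivative_C_mul, Polynomial.derivative_X_pow, Polynomial.C_mul]
    push_cast
    ring

noncomputable def F (n : ℕ) : Polynomial ℤ :=
  ∑ k ∈ range (n + 1), Polynomial.C ((S n k : ℤ) * (Nat.factorial k : ℤ)) * Polynomial.X ^ k

lemma F_add_deriv (k : ℕ) :
    F k + Polynomial.X * Polynomial.derivative (F k)
      = ∑ m ∈ range (k + 1), Polynomial.C ((S k m : ℤ) * ((m+1).factorial : ℤ)) * Polynomial.X ^ m := by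
  unfold F
  rw [Polynomial.derivative_sum, Finset.mul_sum, ← Finset.sum_add_distrib]
  refine Finset.sum_congr rfl fun m _ => ?_
  rw [X_mul_deriv, ← add_mul, ← Polynomial.C_add]
  congr 2
  rw [Nat.factorial_succ]
  push_cast
  ring

theorem stmt13 (n : ℕ) :
    F (n + 1) =
      Polynomial.X * ∑ k ∈ range (n + 1), Polynomial.C (n.choose k : ℤ) *
        (F k + Polynomial.X * Polynomial.derivative (F k)) := by
  -- rewrite RHS
  have ext_range : ∀ k ∈ range (n+1),
      Polynomial.C (n.choose k : ℤ) * (F k + Polynomial.X * Polynomial.derivative (F k))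
      = ∑ m ∈ range (n + 1), Polynomial.C ((n.choose k : ℤ) * (S k m : ℤ) * ((m+1).factorial : ℤ)) * Polynomial.X ^ m := by
    intro k hk
    rw [F_add_deriv, Finset.mul_sum]
    rw [Finset.sum_subset (Finset.range_subset_range.mpr (Finset.mem_range.mp hk))]
    · refine Finset.sum_congr rfl fun m _ => ?_
      rw [← mul_assoc, ← Polynomial.C_mul]; ring_nf
    · intro m _ hm
      have : k < m := Nat.lt_of_succ_le (not_lt.mp (fun h => hm (Finset.mem_range.mpr h)))
      simp [S_eq_zero this]
  rw [Finset.sum_congr rfl ext_range, Finset.sum_comm, Finset.mul_sum]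
  unfold F
  rw [Finset.sum_range_succ']
  have h0 : Polynomial.C ((S (n+1) 0 : ℤ) * ((Nat.factorial 0 : ℕ) : ℤ)) * Polynomial.X ^ 0 = 0 := by
    have : S (n+1) 0 = 0 := rfl
    simp [this]
  rw [h0, add_zero]
  refine Finset.sum_congr rfl fun m hm => ?_
  rw [Finset.mul_sum]
  have rw1 : ∀ (a : ℤ), Polynomial.X * (Polynomial.C a * Polynomial.X ^ m)
      = Polynomial.C a * Polynomial.X ^ (m+1) := fun a => by ring
  simp only [rw1]
  rw [← Finset.sum_mul, ← map_sum]
  have key : ∑ k ∈ range (n+1), (n.choose k : ℤ) * (S k m : ℤ) * ((m+1).factorial : ℤ)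
      = (S (n+1) (m+1) : ℤ) * ((m+1).factorial : ℤ) := by
    rw [← Finset.sum_mul, S_key]
    push_cast
    ring
  rw [key]
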